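/- arXiv:2605.25833 — 3 statements merged into one kernel-verified Lean document; each statement's English description precedes it below -/
import Mathlib

section
/- Let κ > 0 and let f be a Schwartz function on ℝ whose Fourier transform f̂ is supported in [−κ, κ]. Then |∫_ℝ f(x) dx| ≤ (κ²/2) ∫_ℝ |f(x)| x² dx. -/
open MeasureTheory Real ENNReal Filter

noncomputable section

/-- Fourier transform on ℝ: `f̂(ξ) = ∫ e^{-i x ξ} f(x) dx`. -/
def FT1 (f : ℝ → ℂ) (ξ : ℝ) : ℂ :=
  ∫ x : ℝ, Complex.exp (-(Complex.I * ((x * ξ : ℝ) : ℂ))) * f x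

/-- Inverse Fourier transform on ℝ. -/
def invFT1 (g : ℝ → ℂ) (x : ℝ) : ℂ :=
  ((2 * Real.pi : ℝ) : ℂ)⁻¹ * ∫ ξ : ℝ, Complex.exp (Complex.I * ((x * ξ : ℝ) : ℂ)) * g ξ

/-- Free Schrödinger evolution on ℝ. -/
def schrod1 (f : ℝ → ℂ) (t x : ℝ) : ℂ :=
  ((2 * Real.pi : ℝ) : ℂ)⁻¹ *
    ∫ ξ : ℝ, Complex.exp (Complex.I * ((x * ξ - t * ξ ^ 2 : ℝ) : ℂ)) * FT1 f ξ

/-- Bessel potential norm `‖f‖_{L_s^p}` on ℝ. -/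
def besselNorm1 (s p : ℝ) (f : ℝ → ℂ) : ℝ≥0∞ :=
  eLpNorm (invFT1 fun ξ : ℝ => (((1 + ξ ^ 2) ^ (s / 2) : ℝ) : ℂ) * FT1 f ξ)
    (ENNReal.ofReal p) volume

/-- The maximal function `x ↦ sup_{0<t<1} |e^{itΔ}f(x)|` on ℝ. -/
def maxFn1 (f : ℝ → ℂ) (x : ℝ) : ℝ :=
  ⨆ t : Set.Ioo (0 : ℝ) 1, ‖schrod1 f t.1 x‖

/-- `L^p` norm of the maximal function on the unit ball `(-1,1)`. -/
def maxNorm1 (p : ℝ) (f : ℝ → ℂ) : ℝ≥0∞ :=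
  eLpNorm (maxFn1 f) (ENNReal.ofReal p) (volume.restrict (Metric.ball (0 : ℝ) 1))

/-- Weak `L^{q,∞}` norm over the unit ball `(-1,1)`. -/
def weakNorm1 (q : ℝ) (g : ℝ → ℝ) : ℝ≥0∞ :=
  ⨆ α : {a : ℝ // 0 < a}, ENNReal.ofReal α.1 *
    volume {x : ℝ | x ∈ Metric.ball (0 : ℝ) 1 ∧ α.1 < |g x|} ^ (1 / q)

/-- If `κ > 0` and `f` is a Schwartz function on ℝ with `f̂` supported in
`[−κ, κ]`, then `|∫ f| ≤ (κ²/2) ∫ |f(x)| x² dx`. -/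
theorem stmt8 (κ : ℝ) (hκ : 0 < κ) (f : SchwartzMap ℝ ℂ)
    (hsupp : ∀ ξ : ℝ, κ < |ξ| → FT1 (⇑f) ξ = 0) :
    ‖∫ x : ℝ, f x‖ ≤ κ ^ 2 / 2 * ∫ x : ℝ, ‖f x‖ * x ^ 2 := by
  set C : ℝ := ∫ x : ℝ, ‖f x‖ * x ^ 2 with hC
  have hCint : Integrable (fun x : ℝ => ‖f x‖ * x ^ 2) := by
    have := f.integrable_pow_mul volume 2
    apply this.congr
    filter_upwards with x
    simp [mul_comm, sq_abs]
  have key : ∀ ξ : ℝ, κ < ξ → ‖∫ x : ℝ, f x‖ ≤ ξ ^ 2 / 2 * C := by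
    intro ξ hξ
    have hξ0 : 0 < ξ := hκ.trans hξ
    have h1 : FT1 (⇑f) ξ = 0 := hsupp ξ (by rwa [abs_of_pos hξ0])
    have h2 : FT1 (⇑f) (-ξ) = 0 := hsupp (-ξ) (by rwa [abs_neg, abs_of_pos hξ0])
    have hfint : Integrable (fun x : ℝ => f x) := f.integrable
    have hcint : Integrable (fun x : ℝ => ((Real.cos (x * ξ) : ℝ) : ℂ) * f x) := by
      apply hfint.bdd_mul (c := 1)
      · exact (Complex.continuous_ofReal.comp
          (Real.continuous_cos.comp (continuous_id.mul continuous_const))).aestronglyMeasurable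
      · exact Filter.Eventually.of_forall (fun x => by rw [Complex.norm_real, Real.norm_eq_abs]; exact abs_cos_le_one _)
    have hexp1 : Integrable (fun x : ℝ => Complex.exp (-(Complex.I * ((x * ξ : ℝ) : ℂ))) * f x) := by
      apply hfint.bdd_mul (c := 1)
      · exact (Complex.continuous_exp.comp (by continuity)).aestronglyMeasurable
      · exact Filter.Eventually.of_forall (fun x => by simp [Complex.norm_exp])
    have hexp2 : Integrable (fun x : ℝ => Complex.exp (Complex.I * ((x * ξ : ℝ) : ℂ)) * f x) := by
      apply hfint.bdd_mul (c := 1)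
      · exact (Complex.continuous_exp.comp (by continuity)).aestronglyMeasurable
      · exact Filter.Eventually.of_forall (fun x => by simp [Complex.norm_exp])
    have hcos : (∫ x : ℝ, ((Real.cos (x * ξ) : ℝ) : ℂ) * f x) = 0 := by
      have hsum : FT1 (⇑f) ξ + FT1 (⇑f) (-ξ)
          = 2 * ∫ x : ℝ, ((Real.cos (x * ξ) : ℝ) : ℂ) * f x := by
        rw [FT1, FT1, ← integral_add hexp1 (by
          apply hexp2.congr
          filter_upwards with x
          congr 1
          congr 1
          push_cast
          ring), ← integral_const_mul]
        · congr 1 with x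
          rw [Complex.ofReal_cos, Complex.cos]
          have e1 : -(Complex.I * ((x * ξ : ℝ) : ℂ)) = ((x * ξ : ℝ) : ℂ) * Complex.I ∨ True := Or.inr trivial
          have h3 : -(Complex.I * ((x * (-ξ) : ℝ) : ℂ)) = ((x * ξ : ℝ) : ℂ) * Complex.I := by
            push_cast; ring
          have h4 : -(Complex.I * ((x * ξ : ℝ) : ℂ)) = -((x * ξ : ℝ) : ℂ) * Complex.I := by ring
          rw [h3, h4]
          ring
      rw [h1, h2] at hsum
      have := hsum.symm
      field_simp at this
      simpa using this
    have heq : (∫ x : ℝ, f x) = ∫ x : ℝ, ((1 : ℂ) - ((Real.cos (x * ξ) : ℝ) : ℂ)) * f x := by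
      have : (∫ x : ℝ, ((1 : ℂ) - ((Real.cos (x * ξ) : ℝ) : ℂ)) * f x)
          = (∫ x : ℝ, f x) - ∫ x : ℝ, ((Real.cos (x * ξ) : ℝ) : ℂ) * f x := by
        rw [← integral_sub hfint hcint]
        congr 1 with x
        ring
      rw [this, hcos, sub_zero]
    rw [heq]
    have hbd : Integrable (fun x : ℝ => ξ ^ 2 / 2 * (‖f x‖ * x ^ 2)) := hCint.const_mul _
    calc ‖∫ x : ℝ, ((1 : ℂ) - ((Real.cos (x * ξ) : ℝ) : ℂ)) * f x‖
        ≤ ∫ x : ℝ, ξ ^ 2 / 2 * (‖f x‖ * x ^ 2) := by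
          apply norm_integral_le_of_norm_le hbd
          filter_upwards with x
          rw [norm_mul]
          have h5 : ((1 : ℂ) - ((Real.cos (x * ξ) : ℝ) : ℂ)) = ((1 - Real.cos (x * ξ) : ℝ) : ℂ) := by
            push_cast; ring
          rw [h5, Complex.norm_real, Real.norm_eq_abs,
            abs_of_nonneg (by linarith [Real.cos_le_one (x * ξ)])]
          have h6 : 1 - Real.cos (x * ξ) ≤ (x * ξ) ^ 2 / 2 := by
            have := Real.one_sub_sq_div_two_le_cos (x := x * ξ)
            linarith
          calc (1 - Real.cos (x * ξ)) * ‖f x‖ ≤ (x * ξ) ^ 2 / 2 * ‖f x‖ := by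
                apply mul_le_mul_of_nonneg_right h6 (norm_nonneg _)
            _ = ξ ^ 2 / 2 * (‖f x‖ * x ^ 2) := by ring
      _ = ξ ^ 2 / 2 * C := by rw [integral_const_mul]
  -- take ξ → κ⁺
  have ht : Tendsto (fun ξ : ℝ => ξ ^ 2 / 2 * C) (nhdsWithin κ (Set.Ioi κ)) (nhds (κ ^ 2 / 2 * C)) := by
    apply Tendsto.mono_left _ nhdsWithin_le_nhds
    exact (Continuous.tendsto (by continuity) κ)
  refine ge_of_tendsto ht ?_
  filter_upwards [self_mem_nhdsWithin] with ξ hξ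
  exact key ξ hξ
end
end

section
/- There exist a real number κ₀ > 2√2 and a Schwartz function φ on ℝ such that the Fourier transform φ̂ is supported in [−κ₀, κ₀] and 4 ∫_ℝ |φ(x)| x² dx < |∫_ℝ φ(x) dx|. -/
open MeasureTheory Real ENNReal
open FourierTransform SchwartzMap

noncomputable section

/-- A smooth compactly supported function is a Schwartz map. -/
def ofCompactSupport' (f : ℝ → ℂ) (h1 : ContDiff ℝ (⊤:ℕ∞) f) (h2 : HasCompactSupport f) :
    SchwartzMap ℝ ℂ where
  toFun := f
  smooth' := h1
  decay' := by
    intro k n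
    have hcs : HasCompactSupport fun x : ℝ => ‖x‖ ^ k * ‖iteratedFDeriv ℝ n f x‖ := by
      apply HasCompactSupport.mul_left
      exact (h2.iteratedFDeriv n).norm
    have hcont : Continuous fun x : ℝ => ‖x‖ ^ k * ‖iteratedFDeriv ℝ n f x‖ :=
      (continuous_norm.pow k).mul (h1.continuous_iteratedFDeriv (mod_cast le_top)).norm
    obtain ⟨C, hC⟩ := hcs.exists_bound_of_continuous hcont
    exact ⟨C, fun x => by simpa using hC x⟩

lemma ft1_eq (f : ℝ → ℂ) (ξ : ℝ) : FT1 f ξ = 𝓕 f (ξ / (2 * π)) := by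
  rw [Real.fourier_eq']
  unfold FT1
  congr 1
  funext x
  rw [smul_eq_mul]
  congr 2
  have hin : (inner ℝ x (ξ / (2 * π)) : ℝ) = x * (ξ / (2 * π)) := by simp [mul_comm]
  rw [hin]
  have hp : (π : ℝ) ≠ 0 := Real.pi_ne_zero
  have : (-2 * π * (x * (ξ / (2 * π))) : ℝ) = -(x * ξ) := by field_simp
  rw [this]
  push_cast
  ring

lemma ftzero (f : ℝ → ℂ) : 𝓕 f 0 = ∫ x, f x := by
  rw [Real.fourier_eq']
  simp


set_option maxHeartbeats 1000000 in
/-- There exist `κ₀ > 2√2` and a Schwartz function `φ` on ℝ with `φ̂` supported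
in `[−κ₀, κ₀]` and `4 ∫ |φ(x)| x² dx < |∫ φ|`. -/
theorem stmt9 :
    ∃ κ₀ : ℝ, 2 * Real.sqrt 2 < κ₀ ∧ ∃ φ : SchwartzMap ℝ ℂ,
      (∀ ξ : ℝ, κ₀ < |ξ| → FT1 (⇑φ) ξ = 0) ∧
      4 * ∫ x : ℝ, ‖φ x‖ * x ^ 2 < ‖∫ x : ℝ, φ x‖ := by
  classical
  set b : ContDiffBump (0 : ℝ) := ⟨1, 2, one_pos, one_lt_two⟩ with hb
  have hbsm : ContDiff ℝ (⊤ : ℕ∞) (fun x : ℝ => (b x : ℂ)) :=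
    Complex.ofRealCLM.contDiff.comp b.contDiff
  have hbcs : HasCompactSupport (fun x : ℝ => (b x : ℂ)) :=
    b.hasCompactSupport.comp_left (g := Complex.ofReal) rfl
  set B : SchwartzMap ℝ ℂ := ofCompactSupport' _ hbsm hbcs with hB
  set ψ : SchwartzMap ℝ ℂ := (fourierTransformCLE ℂ 𝓢(ℝ, ℂ)).symm B with hψ
  have hFT : 𝓕 ⇑ψ = ⇑B := by
    have h1 : fourierTransformCLE ℂ 𝓢(ℝ, ℂ) ψ = B := (fourierTransformCLE ℂ 𝓢(ℝ, ℂ)).apply_symm_apply B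
    rw [← h1]
    exact rfl
  have hBcoe : ∀ x, B x = ((b x : ℝ) : ℂ) := fun x => rfl
  have hint : (∫ x : ℝ, ψ x) = 1 := by
    rw [← ftzero, hFT, hBcoe]
    rw [b.one_of_mem_closedBall (Metric.mem_closedBall_self b.rIn_pos.le)]
    norm_num
  set C : ℝ := ∫ x : ℝ, ‖ψ x‖ * x ^ 2 with hC
  have hC0 : 0 ≤ C := integral_nonneg (fun x => by positivity)
  set a : ℝ := max 3 (2 * Real.sqrt C + 1) with ha
  have ha3 : (3 : ℝ) ≤ a := le_max_left _ _
  have ha0 : (0 : ℝ) < a := by linarith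
  have haC : 4 * C < a ^ 2 := by
    have h1 : 2 * Real.sqrt C + 1 ≤ a := le_max_right _ _
    have h2 : Real.sqrt C ^ 2 = C := Real.sq_sqrt hC0
    nlinarith [Real.sqrt_nonneg C]
  set e : ℝ ≃L[ℝ] ℝ :=
    (LinearEquiv.smulOfNeZero ℝ ℝ a (ne_of_gt ha0)).toContinuousLinearEquiv with he
  set φ : SchwartzMap ℝ ℂ := compCLMOfContinuousLinearEquiv ℝ e ψ with hφdef
  have hφ : ∀ x, φ x = ψ (a * x) := fun x => rfl
  refine ⟨4 * π * a, ?_, φ, ?_, ?_⟩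
  · have h2 : Real.sqrt 2 < 2 := by
      nlinarith [Real.sq_sqrt (show (0:ℝ) ≤ 2 by norm_num), Real.sqrt_nonneg 2]
    nlinarith [Real.pi_gt_three]
  · intro ξ hξ
    have hcomp : FT1 (⇑φ) ξ = |a⁻¹| • FT1 (⇑ψ) (ξ / a) := by
      have key := MeasureTheory.Measure.integral_comp_mul_left
        (fun y : ℝ => Complex.exp (-(Complex.I * ((y * (ξ / a) : ℝ) : ℂ))) * ψ y) a
      unfold FT1
      rw [← key]
      congr 1
      funext x
      rw [hφ, show (a * x * (ξ / a) : ℝ) = x * ξ by field_simp]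
    rw [hcomp, ft1_eq, hFT, hBcoe]
    have hzero : b (ξ / a / (2 * π)) = 0 := by
      apply b.zero_of_le_dist
      show (2 : ℝ) ≤ dist (ξ / a / (2 * π)) 0
      have h1 : |ξ / a / (2 * π)| = |ξ| / (a * (2 * π)) := by
        rw [abs_div, abs_div, abs_of_pos ha0,
          abs_of_pos (by positivity : (0:ℝ) < 2 * π), div_div]
      rw [Real.dist_eq, sub_zero, h1, le_div_iff₀ (by positivity)]
      nlinarith [Real.pi_pos]
    rw [hzero]
    simp
  · have hI1 : (∫ x : ℝ, φ x) = (a⁻¹ : ℝ) • (1 : ℂ) := by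
      have key := MeasureTheory.Measure.integral_comp_mul_left (fun y : ℝ => ψ y) a
      calc (∫ x : ℝ, φ x) = ∫ x : ℝ, ψ (a * x) := by simp_rw [hφ]
        _ = |a⁻¹| • ∫ y : ℝ, ψ y := key
        _ = (a⁻¹ : ℝ) • (1 : ℂ) := by rw [hint, abs_of_pos (by positivity : (0:ℝ) < a⁻¹)]
    have hI2 : (∫ x : ℝ, ‖φ x‖ * x ^ 2) = a⁻¹ * (a⁻¹ ^ 2 * C) := by
      have key := MeasureTheory.Measure.integral_comp_mul_left
        (fun y : ℝ => ‖ψ y‖ * (y / a) ^ 2) a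
      calc (∫ x : ℝ, ‖φ x‖ * x ^ 2)
          = ∫ x : ℝ, ‖ψ (a * x)‖ * (a * x / a) ^ 2 := by
            congr 1; funext x; rw [hφ, mul_div_cancel_left₀ x (ne_of_gt ha0)]
        _ = |a⁻¹| • ∫ y : ℝ, ‖ψ y‖ * (y / a) ^ 2 := key
        _ = a⁻¹ * (a⁻¹ ^ 2 * C) := by
            rw [abs_of_pos (by positivity : (0:ℝ) < a⁻¹), smul_eq_mul]
            congr 1
            have : ∀ y : ℝ, ‖ψ y‖ * (y / a) ^ 2 = a⁻¹ ^ 2 * (‖ψ y‖ * y ^ 2) := by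
              intro y; field_simp
            simp_rw [this]
            rw [MeasureTheory.integral_const_mul]
    rw [hI1, hI2, norm_smul]
    simp only [norm_one, mul_one, Real.norm_eq_abs, abs_of_pos (by positivity : (0:ℝ) < a⁻¹)]
    have e2 : a ^ 2 * a⁻¹ ^ 3 = a⁻¹ := by
      field_simp
    calc 4 * (a⁻¹ * (a⁻¹ ^ 2 * C)) = (4 * C) * a⁻¹ ^ 3 := by ring
      _ < a ^ 2 * a⁻¹ ^ 3 := by
          exact mul_lt_mul_of_pos_right haC (by positivity)
      _ = a⁻¹ := e2
end
end

section
/- Let η be a Schwartz function on ℝ satisfying 4 ∫_ℝ |η(y)| y² dy < |∫_ℝ η(y) dy|. For 0 < ν < 1 define f_ν(y) = η(y/ν) e^{2iy/ν²}. Then there exists a constant C₀ > 0 (depending only on η) such that for every ν ∈ (0,1) and every x ∈ (1/4, 1), sup_{0<t<1} |e^{itΔ}f_ν(x)| ≥ C₀. -/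
open MeasureTheory Real ENNReal

noncomputable section

section Aux

lemma L1 (θ : ℝ) : ‖Complex.exp ((θ:ℂ) * Complex.I) - 1‖ ≤ |θ| := by
  rw [Complex.exp_mul_I]
  have h1 : Complex.cos θ + Complex.sin θ * Complex.I - 1
      = ((Real.cos θ - 1 : ℝ) : ℂ) + ((Real.sin θ : ℝ) : ℂ) * Complex.I := by
    push_cast [Complex.ofReal_cos, Complex.ofReal_sin]; ring
  rw [h1]
  have h2 : ‖((Real.cos θ - 1 : ℝ) : ℂ) + ((Real.sin θ : ℝ) : ℂ) * Complex.I‖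
      = Real.sqrt ((Real.cos θ - 1)^2 + (Real.sin θ)^2) := by
    rw [Complex.norm_def, Complex.normSq_add_mul_I]
  rw [h2]
  have h3 : (Real.cos θ - 1)^2 + (Real.sin θ)^2 ≤ θ^2 := by
    have := Real.sin_sq_add_cos_sq θ
    have h4 := Real.one_sub_sq_div_two_le_cos (x := θ)
    have h5 := Real.cos_le_one θ
    nlinarith [sq_nonneg θ, sq_nonneg (θ^2)]
  calc Real.sqrt ((Real.cos θ - 1)^2 + (Real.sin θ)^2) ≤ Real.sqrt (θ^2) :=
        Real.sqrt_le_sqrt h3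
    _ = |θ| := Real.sqrt_sq_eq_abs θ

lemma FT1_eq_fourier (η : SchwartzMap ℝ ℂ) (ξ : ℝ) :
    FT1 η ξ = FourierTransform.fourier (η : ℝ → ℂ) (ξ / (2 * π)) := by
  rw [Real.fourier_real_eq_integral_exp_smul]
  unfold FT1
  congr 1; ext v
  have : (-2 * π * v * (ξ / (2 * π)) : ℝ) = -(v * ξ) := by
    field_simp
  rw [this, smul_eq_mul]
  congr 1
  push_cast; ring

lemma FT1_cont (η : SchwartzMap ℝ ℂ) : Continuous (FT1 η) := by
  have : FT1 η = fun ξ => (SchwartzMap.fourierTransformCLM ℂ η) (ξ / (2 * π)) := by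
    ext ξ; rw [FT1_eq_fourier]; simp [SchwartzMap.fourierTransformCLM_apply, SchwartzMap.fourier_coe]
  rw [this]
  exact (SchwartzMap.fourierTransformCLM ℂ η).continuous.comp (continuous_id.div_const _)

lemma FT1_integrable (η : SchwartzMap ℝ ℂ) : Integrable (FT1 η) := by
  have : FT1 η = fun ξ => (SchwartzMap.fourierTransformCLM ℂ η) (ξ / (2 * π)) := by
    ext ξ; rw [FT1_eq_fourier]; simp [SchwartzMap.fourierTransformCLM_apply, SchwartzMap.fourier_coe]
  rw [this]
  exact ((SchwartzMap.fourierTransformCLM ℂ η).integrable).comp_div (by positivity)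

lemma L3 (η : SchwartzMap ℝ ℂ) {b : ℂ} (hb : 0 < b.re) :
    ∫ u : ℝ, Complex.exp (-b * u ^ 2) * FT1 η u
      = (π / b) ^ (1/2 : ℂ) * ∫ y : ℝ, η y * Complex.exp (-(y:ℂ)^2 / (4 * b)) := by
  have key : ∫ u : ℝ, Complex.exp (-b * u ^ 2) * FT1 η u
      = ∫ y : ℝ, η y * ∫ u : ℝ, Complex.exp (Complex.I * (-(y:ℂ)) * u) * Complex.exp (-b * u^2) := by
    unfold FT1
    have h1 : ∀ u : ℝ, Complex.exp (-b * u ^ 2) * ∫ x : ℝ, Complex.exp (-(Complex.I * ((x * u : ℝ) : ℂ))) * η x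
        = ∫ x : ℝ, Complex.exp (-b * u ^ 2) * (Complex.exp (-(Complex.I * ((x * u : ℝ) : ℂ))) * η x) := by
      intro u; rw [integral_const_mul]
    simp_rw [h1]
    rw [integral_integral_swap]
    · congr 1; ext y
      rw [← integral_const_mul]
      congr 1; ext u
      have : Complex.exp (Complex.I * -(y:ℂ) * u) = Complex.exp (-(Complex.I * ((y * u : ℝ) : ℂ))) := by
        congr 1; push_cast; ring
      rw [this]; ring
    · -- Integrable on product
      have hcont : Continuous fun p : ℝ × ℝ =>
          Complex.exp (-b * p.1 ^ 2) * (Complex.exp (-(Complex.I * ((p.2 * p.1 : ℝ) : ℂ))) * η p.2) := by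
        fun_prop
      apply (Integrable.mono' (g := fun p : ℝ × ℝ => Real.exp (-b.re * p.1^2) * ‖η p.2‖) ?_ hcont.aestronglyMeasurable ?_)
      · exact (integrable_exp_neg_mul_sq hb).mul_prod (η.integrable.norm)
      · filter_upwards with p
        rw [norm_mul, norm_mul]
        have e1 : ‖Complex.exp (-b * (p.1:ℂ) ^ 2)‖ = Real.exp (-b.re * p.1^2) := by
          rw [Complex.norm_exp]
          congr 1
          simp [← Complex.ofReal_pow, Complex.mul_re]
        have e2 : ‖Complex.exp (-(Complex.I * ((p.2 * p.1 : ℝ) : ℂ)))‖ = 1 := by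
          rw [Complex.norm_exp]
          simp
        rw [e1, e2, one_mul]
  rw [key, ← integral_const_mul]
  congr 1; ext y
  rw [fourierIntegral_gaussian hb (-(y:ℂ))]
  ring_nf

lemma L4 (η : SchwartzMap ℝ ℂ) {x : ℝ} (hx : 0 < x) :
    ∫ u : ℝ, Complex.exp (-(((x/4 : ℝ):ℂ) * Complex.I) * u ^ 2) * FT1 η u
      = (π / (((x/4 : ℝ):ℂ) * Complex.I)) ^ (1/2 : ℂ) *
        ∫ y : ℝ, η y * Complex.exp (-(y:ℂ)^2 / (4 * (((x/4 : ℝ):ℂ) * Complex.I))) := by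
  set b₀ : ℂ := ((x/4 : ℝ):ℂ) * Complex.I with hb₀
  have hb₀re : b₀.re = 0 := by simp [hb₀]
  have hb₀im : b₀.im = x/4 := by simp [hb₀]
  have hb₀ne : b₀ ≠ 0 := by
    intro h
    rw [Complex.ext_iff] at h
    simp [hb₀im] at h
    linarith [h.2]
  set b : ℕ → ℂ := fun n => ((1 / (n+1) : ℝ) : ℂ) + b₀ with hb
  have hbre : ∀ n, (b n).re = 1/(n+1) := by
    intro n
    show (((1 / (n+1) : ℝ) : ℂ) + b₀).re = 1/(n+1)
    rw [Complex.add_re, Complex.ofReal_re, hb₀re, add_zero]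
  have hbre_pos : ∀ n, 0 < (b n).re := by
    intro n; rw [hbre]; positivity
  have hbne : ∀ n, b n ≠ 0 := fun n => by
    intro h
    have := hbre_pos n
    rw [h] at this; simp at this
  have hbtend : Filter.Tendsto b Filter.atTop (nhds b₀) := by
    have : Filter.Tendsto (fun n : ℕ => ((1 / (n+1) : ℝ) : ℂ)) Filter.atTop (nhds 0) := by
      rw [show ((0:ℂ)) = ((0:ℝ):ℂ) by norm_num]
      apply Filter.Tendsto.comp (Complex.continuous_ofReal.tendsto 0)
      exact tendsto_one_div_add_atTop_nhds_zero_nat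
    have h := this.add_const b₀
    rw [zero_add] at h
    exact h
  have hL : Filter.Tendsto (fun n => ∫ u : ℝ, Complex.exp (-(b n) * u ^ 2) * FT1 η u) Filter.atTop
      (nhds (∫ u : ℝ, Complex.exp (-b₀ * u ^ 2) * FT1 η u)) := by
    apply tendsto_integral_of_dominated_convergence (fun u => ‖FT1 η u‖)
    · intro n
      exact (Continuous.mul (by fun_prop) (FT1_cont η)).aestronglyMeasurable
    · exact (FT1_integrable η).norm
    · intro n
      filter_upwards with u
      rw [norm_mul]
      have : ‖Complex.exp (-(b n) * (u:ℂ) ^ 2)‖ = Real.exp (-(1/(n+1)) * u^2) := by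
        rw [Complex.norm_exp]
        congr 1
        simp [← Complex.ofReal_pow, Complex.mul_re, hbre]
      rw [this]
      have : Real.exp (-(1/(n+1)) * u^2) ≤ 1 := by
        rw [Real.exp_le_one_iff]
        have : (0:ℝ) ≤ 1/(n+1) := by positivity
        nlinarith [sq_nonneg u]
      nlinarith [norm_nonneg (FT1 η u), this, Real.exp_pos (-(1/((n:ℝ)+1)) * u^2)]
    · filter_upwards with u
      have : Filter.Tendsto (fun n => -(b n) * (u:ℂ)^2) Filter.atTop (nhds (-b₀ * u^2)) :=
        (hbtend.neg).mul_const _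
      exact (Complex.continuous_exp.tendsto _).comp this |>.mul_const _
  have hR : Filter.Tendsto (fun n => (π / (b n)) ^ (1/2 : ℂ) *
        ∫ y : ℝ, η y * Complex.exp (-(y:ℂ)^2 / (4 * (b n)))) Filter.atTop
      (nhds ((π / b₀) ^ (1/2 : ℂ) * ∫ y : ℝ, η y * Complex.exp (-(y:ℂ)^2 / (4 * b₀)))) := by
    apply Filter.Tendsto.mul
    · have h1 : Filter.Tendsto (fun n => (π : ℂ) / (b n)) Filter.atTop (nhds ((π:ℂ) / b₀)) :=
        tendsto_const_nhds.div hbtend hb₀ne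
      have h2 : ContinuousAt (fun z : ℂ => z ^ (1/2 : ℂ)) ((π:ℂ)/b₀) := by
        apply continuousAt_cpow_const
        rw [Complex.mem_slitPlane_iff]
        right
        have hns : 0 < Complex.normSq b₀ := Complex.normSq_pos.mpr hb₀ne
        have hπ : (0:ℝ) < π := Real.pi_pos
        have him2 : ((π:ℂ)/b₀).im = -(π * (x/4) / Complex.normSq b₀) := by
          rw [Complex.div_im, hb₀re, hb₀im, Complex.ofReal_im, Complex.ofReal_re]
          ring
        rw [him2, neg_ne_zero]
        exact ne_of_gt (div_pos (by nlinarith) hns)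
      exact h2.tendsto.comp h1
    · apply tendsto_integral_of_dominated_convergence (fun y => ‖η y‖)
      · intro n
        exact (η.continuous.mul (by fun_prop)).aestronglyMeasurable
      · exact η.integrable.norm
      · intro n
        filter_upwards with y
        rw [norm_mul]
        have h3 : ‖Complex.exp (-(y:ℂ)^2 / (4 * (b n)))‖ ≤ 1 := by
          rw [Complex.norm_exp, Real.exp_le_one_iff]
          have : (-(y:ℂ)^2 / (4 * (b n))).re = -(y^2) * ((4 * (b n)).re / Complex.normSq (4 * b n)) := by
            rw [Complex.div_re]
            simp [← Complex.ofReal_pow]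
            ring
          rw [this]
          have h4 : (0:ℝ) ≤ (4 * (b n)).re := by
            have : (4 * (b n)).re = 4 * (b n).re := by
              simp [Complex.mul_re]
            rw [this]
            have := hbre_pos n
            positivity
          have h5 : (0:ℝ) ≤ Complex.normSq (4 * b n) := Complex.normSq_nonneg _
          have := div_nonneg h4 h5
          nlinarith [sq_nonneg y]
        calc ‖η y‖ * ‖Complex.exp (-(y:ℂ)^2 / (4 * (b n)))‖ ≤ ‖η y‖ * 1 := by
              exact mul_le_mul_of_nonneg_left h3 (norm_nonneg _)
          _ = ‖η y‖ := mul_one _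
      · filter_upwards with y
        have h6 : Filter.Tendsto (fun n => -(y:ℂ)^2 / (4 * (b n))) Filter.atTop (nhds (-(y:ℂ)^2 / (4 * b₀))) := by
          apply Filter.Tendsto.div tendsto_const_nhds ((tendsto_const_nhds.mul hbtend))
          simpa using hb₀ne
        exact ((Complex.continuous_exp.tendsto _).comp h6).const_mul _
  have heq : ∀ n, ∫ u : ℝ, Complex.exp (-(b n) * u ^ 2) * FT1 η u
      = (π / (b n)) ^ (1/2 : ℂ) * ∫ y : ℝ, η y * Complex.exp (-(y:ℂ)^2 / (4 * (b n))) :=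
    fun n => L3 η (hbre_pos n)
  have := tendsto_nhds_unique (hL.congr (fun n => heq n)) hR
  rw [← this]

lemma stepA (η : SchwartzMap ℝ ℂ) {ν : ℝ} (hν : 0 < ν) (ξ : ℝ) :
    FT1 (fun y : ℝ => η (y / ν) * Complex.exp (Complex.I * ((2 * y / ν ^ 2 : ℝ) : ℂ))) ξ
      = ν * FT1 η (ν * ξ - 2 / ν) := by
  unfold FT1
  have hνne : ν ≠ 0 := ne_of_gt hν
  have key : ∀ y : ℝ,
      Complex.exp (-(Complex.I * ((y * ξ : ℝ) : ℂ))) *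
        (η (y / ν) * Complex.exp (Complex.I * ((2 * y / ν ^ 2 : ℝ) : ℂ)))
      = (fun z : ℝ => Complex.exp (-(Complex.I * ((z * (ν * ξ - 2 / ν) : ℝ) : ℂ))) * η z) (y / ν) := by
    intro y
    simp only
    rw [mul_comm (η (y/ν)), ← mul_assoc, ← Complex.exp_add]
    congr 2
    have : ((y / ν * (ν * ξ - 2 / ν) : ℝ) : ℂ) = ((y * ξ - 2 * y / ν ^ 2 : ℝ) : ℂ) := by
      congr 1
      field_simp
    rw [this]
    push_cast
    ring
  simp_rw [key]
  rw [MeasureTheory.Measure.integral_comp_div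
    (fun z : ℝ => Complex.exp (-(Complex.I * ((z * (ν * ξ - 2 / ν) : ℝ) : ℂ))) * η z) ν]
  rw [abs_of_pos hν]
  simp [smul_eq_mul]

lemma stepB (η : SchwartzMap ℝ ℂ) {ν x : ℝ} (hν : 0 < ν) (hx : 0 < x) :
    schrod1 (fun y : ℝ => η (y / ν) * Complex.exp (Complex.I * ((2 * y / ν ^ 2 : ℝ) : ℂ)))
      (ν ^ 2 * x / 4) x
    = Complex.exp (Complex.I * ((x / ν ^ 2 : ℝ) : ℂ)) *
      (((2 * Real.pi : ℝ) : ℂ)⁻¹ *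
        ∫ u : ℝ, Complex.exp (-(((x / 4 : ℝ) : ℂ) * Complex.I) * u ^ 2) * FT1 η u) := by
  have hνne : ν ≠ 0 := ne_of_gt hν
  unfold schrod1
  have e1 : ∀ ξ : ℝ,
      Complex.exp (Complex.I * ((x * ξ - ν ^ 2 * x / 4 * ξ ^ 2 : ℝ) : ℂ)) *
        FT1 (fun y : ℝ => η (y / ν) * Complex.exp (Complex.I * ((2 * y / ν ^ 2 : ℝ) : ℂ))) ξ
      = (fun w : ℝ => Complex.exp (Complex.I * ((x * (w/ν) - ν ^ 2 * x / 4 * (w/ν) ^ 2 : ℝ) : ℂ)) *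
          (ν * FT1 η (ν * (w/ν) - 2 / ν))) (ν * ξ) := by
    intro ξ
    rw [stepA η hν]
    simp only
    rw [mul_div_cancel_left₀ _ hνne]
  simp_rw [e1]
  rw [MeasureTheory.Measure.integral_comp_mul_left
    (fun w : ℝ => Complex.exp (Complex.I * ((x * (w/ν) - ν ^ 2 * x / 4 * (w/ν) ^ 2 : ℝ) : ℂ)) *
      (ν * FT1 η (ν * (w/ν) - 2 / ν))) ν]
  rw [show (∫ w : ℝ, Complex.exp (Complex.I * ((x * (w/ν) - ν ^ 2 * x / 4 * (w/ν) ^ 2 : ℝ) : ℂ)) *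
      (ν * FT1 η (ν * (w/ν) - 2 / ν)))
    = ∫ u : ℝ, (fun w : ℝ => Complex.exp (Complex.I * ((x * (w/ν) - ν ^ 2 * x / 4 * (w/ν) ^ 2 : ℝ) : ℂ)) *
      (ν * FT1 η (ν * (w/ν) - 2 / ν))) (u + 2/ν)
    from (MeasureTheory.integral_add_right_eq_self _ (2/ν)).symm]
  have e2 : ∀ u : ℝ,
      (fun w : ℝ => Complex.exp (Complex.I * ((x * (w/ν) - ν ^ 2 * x / 4 * (w/ν) ^ 2 : ℝ) : ℂ)) *
        (ν * FT1 η (ν * (w/ν) - 2 / ν))) (u + 2/ν)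
      = ν * (Complex.exp (Complex.I * ((x / ν ^ 2 : ℝ) : ℂ)) *
          (Complex.exp (-(((x / 4 : ℝ) : ℂ) * Complex.I) * u ^ 2) * FT1 η u)) := by
    intro u
    simp only
    have harg : ν * ((u + 2/ν)/ν) - 2 / ν = u := by field_simp; ring
    have hphase : (x * ((u + 2/ν)/ν) - ν ^ 2 * x / 4 * ((u + 2/ν)/ν) ^ 2 : ℝ)
        = x / ν ^ 2 - x / 4 * u ^ 2 := by
      field_simp
      ring
    rw [harg, hphase]
    have : Complex.exp (Complex.I * ((x / ν ^ 2 - x / 4 * u ^ 2 : ℝ) : ℂ))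
        = Complex.exp (Complex.I * ((x / ν ^ 2 : ℝ) : ℂ)) *
          Complex.exp (-(((x / 4 : ℝ) : ℂ) * Complex.I) * u ^ 2) := by
      rw [← Complex.exp_add]
      congr 1
      push_cast
      ring
    rw [this]
    ring
  simp_rw [e2]
  rw [integral_const_mul, integral_const_mul, abs_of_pos (inv_pos.mpr hν), Complex.real_smul]
  have hν' : (ν:ℂ) ≠ 0 := Complex.ofReal_ne_zero.mpr hνne
  push_cast
  field_simp

lemma L5 (η : SchwartzMap ℝ ℂ) {x : ℝ} (hx1 : 1/4 < x) (hx2 : x < 1) :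
    ‖∫ y : ℝ, η y * Complex.exp (-(y:ℂ)^2 / (4 * (((x/4 : ℝ):ℂ) * Complex.I)))‖
      ≥ ‖∫ y : ℝ, η y‖ - 4 * ∫ y : ℝ, ‖η y‖ * y ^ 2 := by
  have hx0 : 0 < x := lt_trans (by norm_num) hx1
  have hxC : ((x:ℝ):ℂ) ≠ 0 := Complex.ofReal_ne_zero.mpr (ne_of_gt hx0)
  have harg : ∀ y : ℝ, -(y:ℂ)^2 / (4 * (((x/4 : ℝ):ℂ) * Complex.I)) = ((y^2/x : ℝ):ℂ) * Complex.I := by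
    intro y
    rw [div_eq_iff]
    · push_cast
      field_simp
      linear_combination (-(y:ℂ)^2) * Complex.I_sq
    · push_cast
      simp [Complex.I_ne_zero, hxC]
  simp_rw [harg]
  have hint1 : Integrable (fun y : ℝ => η y) := η.integrable
  have hint2 : Integrable (fun y : ℝ => η y * (Complex.exp (((y^2/x : ℝ):ℂ) * Complex.I) - 1)) := by
    apply Integrable.mono' (g := fun y => ‖η y‖ * 2) (η.integrable.norm.mul_const 2)
    · exact Continuous.aestronglyMeasurable (by fun_prop)
    · filter_upwards with y
      rw [norm_mul]
      apply mul_le_mul_of_nonneg_left ?_ (norm_nonneg _)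
      calc ‖Complex.exp (((y^2/x : ℝ):ℂ) * Complex.I) - 1‖
          ≤ ‖Complex.exp (((y^2/x : ℝ):ℂ) * Complex.I)‖ + ‖(1:ℂ)‖ := norm_sub_le _ _
        _ ≤ 2 := by
            rw [Complex.norm_exp_ofReal_mul_I]
            norm_num
  have hsplit : (∫ y : ℝ, η y * Complex.exp (((y^2/x : ℝ):ℂ) * Complex.I))
      = (∫ y : ℝ, η y) + ∫ y : ℝ, η y * (Complex.exp (((y^2/x : ℝ):ℂ) * Complex.I) - 1) := by
    rw [← integral_add hint1 hint2]
    congr 1; ext y; ring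
  rw [hsplit]
  have h0 : Integrable (fun y : ℝ => ‖η y‖ * (4 * y ^ 2)) := by
    apply ((η.integrable_pow_mul volume 2).const_mul 4).congr
    filter_upwards with y
    rw [Real.norm_eq_abs, _root_.sq_abs]
    ring
  have hb : ‖∫ y : ℝ, η y * (Complex.exp (((y^2/x : ℝ):ℂ) * Complex.I) - 1)‖
      ≤ 4 * ∫ y : ℝ, ‖η y‖ * y ^ 2 := by
    calc ‖∫ y : ℝ, η y * (Complex.exp (((y^2/x : ℝ):ℂ) * Complex.I) - 1)‖
        ≤ ∫ y : ℝ, ‖η y * (Complex.exp (((y^2/x : ℝ):ℂ) * Complex.I) - 1)‖ :=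
          norm_integral_le_integral_norm _
      _ ≤ ∫ y : ℝ, ‖η y‖ * (4 * y ^ 2) := by
          apply integral_mono hint2.norm h0
          intro y
          simp only
          rw [norm_mul]
          apply mul_le_mul_of_nonneg_left ?_ (norm_nonneg _)
          calc ‖Complex.exp (((y^2/x : ℝ):ℂ) * Complex.I) - 1‖ ≤ |y^2/x| := L1 _
            _ ≤ 4 * y ^ 2 := by
                rw [abs_div, _root_.abs_of_nonneg (sq_nonneg y), abs_of_pos hx0, div_le_iff₀ hx0]
                nlinarith [sq_nonneg y]
      _ = 4 * ∫ y : ℝ, ‖η y‖ * y ^ 2 := by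
          rw [← integral_const_mul]
          congr 1; ext y; ring
  have htri := norm_sub_norm_le (∫ y : ℝ, η y)
    (-(∫ y : ℝ, η y * (Complex.exp (((y^2/x : ℝ):ℂ) * Complex.I) - 1)))
  simp only [norm_neg, sub_neg_eq_add] at htri
  linarith

lemma L6 {x : ℝ} (hx0 : 0 < x) (hx2 : x ≤ 1) :
    2 * Real.sqrt π ≤ ‖((π:ℂ) / (((x/4 : ℝ):ℂ) * Complex.I)) ^ (1/2 : ℂ)‖ := by
  have hπ : (0:ℝ) < π := Real.pi_pos
  have hzne : ((π:ℂ) / (((x/4 : ℝ):ℂ) * Complex.I)) ≠ 0 := by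
    apply div_ne_zero
    · exact Complex.ofReal_ne_zero.mpr (ne_of_gt hπ)
    · apply mul_ne_zero _ Complex.I_ne_zero
      exact Complex.ofReal_ne_zero.mpr (by positivity)
  rw [Complex.norm_cpow_of_ne_zero hzne]
  have hre : ((1/2 : ℂ)).re = 1/2 := by norm_num
  have him : ((1/2 : ℂ)).im = 0 := by norm_num
  rw [hre, him, mul_zero, Real.exp_zero, div_one]
  have habs : ‖(π:ℂ) / (((x/4 : ℝ):ℂ) * Complex.I)‖ = 4 * π / x := by
    rw [norm_div, norm_mul, Complex.norm_real, Complex.norm_real, Complex.norm_I, mul_one,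
      Real.norm_eq_abs, Real.norm_eq_abs,
      abs_of_pos hπ, abs_of_pos (by positivity : (0:ℝ) < x/4)]
    field_simp
  rw [habs]
  have h1 : (4 * π : ℝ) ≤ 4 * π / x := by
    rw [le_div_iff₀ hx0]
    nlinarith
  calc 2 * Real.sqrt π = Real.sqrt (4 * π) := by
        rw [show (4:ℝ) * π = 2^2 * π by ring, Real.sqrt_mul (by positivity) π,
          Real.sqrt_sq (by norm_num : (0:ℝ) ≤ 2)]
    _ = (4 * π) ^ (1/2 : ℝ) := Real.sqrt_eq_rpow _
    _ ≤ (4 * π / x) ^ (1/2 : ℝ) := Real.rpow_le_rpow (by positivity) h1 (by norm_num)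

lemma schrod_norm_le (f : ℝ → ℂ) (t x : ℝ) :
    ‖schrod1 f t x‖ ≤ (2 * π)⁻¹ * ∫ ξ : ℝ, ‖FT1 f ξ‖ := by
  unfold schrod1
  rw [norm_mul]
  have h2 : ‖(((2 * Real.pi : ℝ)):ℂ)⁻¹‖ = (2*π)⁻¹ := by
    rw [norm_inv, Complex.norm_real, Real.norm_eq_abs, abs_of_pos (by positivity)]
  rw [h2]
  apply mul_le_mul_of_nonneg_left ?_ (by positivity)
  calc ‖∫ ξ : ℝ, Complex.exp (Complex.I * ((x * ξ - t * ξ ^ 2 : ℝ) : ℂ)) * FT1 f ξ‖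
      ≤ ∫ ξ : ℝ, ‖Complex.exp (Complex.I * ((x * ξ - t * ξ ^ 2 : ℝ) : ℂ)) * FT1 f ξ‖ :=
        norm_integral_le_integral_norm _
    _ = ∫ ξ : ℝ, ‖FT1 f ξ‖ := by
        congr 1; ext ξ
        rw [norm_mul]
        have : Complex.I * ((x * ξ - t * ξ ^ 2 : ℝ) : ℂ) = ((x * ξ - t * ξ ^ 2 : ℝ) : ℂ) * Complex.I :=
          mul_comm _ _
        rw [this, Complex.norm_exp_ofReal_mul_I, one_mul]

end Aux

/-- If `4 ∫ |η(y)| y² dy < |∫ η|` then the maximal Schrödinger function of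
`f_ν(y) = η(y/ν)e^{2iy/ν²}` is bounded below on `(1/4, 1)` uniformly in `0 < ν < 1`. -/
theorem stmt16 (η : SchwartzMap ℝ ℂ)
    (hη : 4 * ∫ y : ℝ, ‖η y‖ * y ^ 2 < ‖∫ y : ℝ, η y‖) :
    ∃ C₀ : ℝ, 0 < C₀ ∧ ∀ ν : ℝ, 0 < ν → ν < 1 → ∀ x : ℝ, x ∈ Set.Ioo (1 / 4 : ℝ) 1 →
      C₀ ≤ ⨆ t : Set.Ioo (0 : ℝ) 1,
        ‖schrod1 (fun y : ℝ => η (y / ν) * Complex.exp (Complex.I * ((2 * y / ν ^ 2 : ℝ) : ℂ))) t.1 x‖ := by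
  set δ : ℝ := ‖∫ y : ℝ, η y‖ - 4 * ∫ y : ℝ, ‖η y‖ * y ^ 2 with hδdef
  have hδ : 0 < δ := by rw [hδdef]; linarith
  refine ⟨2 * Real.sqrt π / (2 * π) * δ, by positivity, ?_⟩
  intro ν hν hν1 x hx
  obtain ⟨hx1, hx2⟩ := hx
  have hx0 : 0 < x := lt_trans (by norm_num) hx1
  have ht₀ : ν ^ 2 * x / 4 ∈ Set.Ioo (0:ℝ) 1 := ⟨by positivity, by nlinarith⟩
  have hval : 2 * Real.sqrt π / (2 * π) * δ ≤
      ‖schrod1 (fun y : ℝ => η (y / ν) * Complex.exp (Complex.I * ((2 * y / ν ^ 2 : ℝ) : ℂ)))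
        (ν ^ 2 * x / 4) x‖ := by
    rw [stepB η hν hx0, norm_mul]
    have h1 : ‖Complex.exp (Complex.I * ((x / ν ^ 2 : ℝ) : ℂ))‖ = 1 := by
      rw [mul_comm Complex.I, Complex.norm_exp_ofReal_mul_I]
    have h2 : ‖(((2 * Real.pi : ℝ)):ℂ)⁻¹‖ = (2*π)⁻¹ := by
      rw [norm_inv, Complex.norm_real, Real.norm_eq_abs, abs_of_pos (by positivity)]
    rw [h1, one_mul, norm_mul, h2, L4 η hx0, norm_mul]
    calc 2 * Real.sqrt π / (2 * π) * δ = (2*π)⁻¹ * (2 * Real.sqrt π * δ) := by ring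
      _ ≤ (2*π)⁻¹ * (‖((π:ℂ) / (((x/4 : ℝ):ℂ) * Complex.I)) ^ (1/2 : ℂ)‖ *
            ‖∫ y : ℝ, η y * Complex.exp (-(y:ℂ)^2 / (4 * (((x/4 : ℝ):ℂ) * Complex.I)))‖) := by
          apply mul_le_mul_of_nonneg_left ?_ (by positivity)
          exact mul_le_mul (L6 hx0 (le_of_lt hx2)) (le_of_eq_of_le hδdef.symm (L5 η hx1 hx2))
            hδ.le (norm_nonneg _)
  have hbdd : BddAbove (Set.range fun t : Set.Ioo (0:ℝ) 1 =>
      ‖schrod1 (fun y : ℝ => η (y / ν) * Complex.exp (Complex.I * ((2 * y / ν ^ 2 : ℝ) : ℂ))) t.1 x‖) := by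
    refine ⟨(2*π)⁻¹ * ∫ ξ : ℝ, ‖FT1 (fun y : ℝ => η (y / ν) *
      Complex.exp (Complex.I * ((2 * y / ν ^ 2 : ℝ) : ℂ))) ξ‖, ?_⟩
    rintro r ⟨t, rfl⟩
    exact schrod_norm_le _ t.1 x
  calc 2 * Real.sqrt π / (2 * π) * δ
      ≤ ‖schrod1 (fun y : ℝ => η (y / ν) * Complex.exp (Complex.I * ((2 * y / ν ^ 2 : ℝ) : ℂ)))
          (ν ^ 2 * x / 4) x‖ := hval
    _ ≤ ⨆ t : Set.Ioo (0 : ℝ) 1,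
        ‖schrod1 (fun y : ℝ => η (y / ν) * Complex.exp (Complex.I * ((2 * y / ν ^ 2 : ℝ) : ℂ))) t.1 x‖ :=
        le_ciSup hbdd (⟨ν ^ 2 * x / 4, ht₀⟩ : Set.Ioo (0:ℝ) 1)
end
end
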